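/- Distributivity of common knowledge over disjunction of positive formulas: For any φ₁, φ₂ ∈ L⁺, any nonempty group G ⊆ N, and any state (V,M), (V,M) ⊨ C_G(φ₁ ∨ φ₂) iff (V,M) ⊨ C_G φ₁ ∨ C_G φ₂ (with respect to the complete hypergraph). -/

import Mathlib

structure Msg (P A : Type) where
  sender : P
  grp : Set P
  fact : A

inductive Form (P A : Type) where
  | atom : A → Form P A
  | neg  : Form P A → Form P A
  | and  : Form P A → Form P A → Form P A
  | or   : Form P A → Form P A → Form P A
  | ck   : Set P → Form P A → Form P A

/-- The negation-free (positive) fragment L⁺. -/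
def Positive {P A : Type} : Form P A → Prop
  | .atom _ => True
  | .neg _ => False
  | .and φ ψ => Positive φ ∧ Positive ψ
  | .or φ ψ => Positive φ ∧ Positive ψ
  | .ck _ φ => Positive φ

/-- Atoms occurring in a formula. -/
def FactsF {P A : Type} : Form P A → Set A
  | .atom p => {p}
  | .neg φ => FactsF φ
  | .and φ ψ => FactsF φ ∪ FactsF ψ
  | .or φ ψ => FactsF φ ∪ FactsF ψ
  | .ck _ φ => FactsF φ

/-- Facts occurring in a set of messages. -/
def Facts {P A : Type} (M : Set (Msg P A)) : Set A := {p | ∃ m ∈ M, m.fact = p}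

/-- A state in the telling setting: messages (i,A,p) with i ∈ A, p ∈ At_i
    (ownership given by `owner`), and Facts(M) ⊆ V. -/
def TState {P A : Type} (owner : A → P) (V : Set A) (M : Set (Msg P A)) : Prop :=
  ∀ m ∈ M, m.sender ∈ m.grp ∧ owner m.fact = m.sender ∧ m.fact ∈ V

/-- All messages are H-compliant. -/
def HComp {P A : Type} (H : Set (Set P)) (M : Set (Msg P A)) : Prop :=
  ∀ m ∈ M, m.grp ∈ H

/-- Indistinguishability for player i: equality of (V_i, M_i). -/
def indist {P A : Type} (owner : A → P) (i : P)
    (s t : Set A × Set (Msg P A)) : Prop :=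
  {p ∈ s.1 | owner p = i} = {p ∈ t.1 | owner p = i} ∧
  {m ∈ s.2 | i ∈ m.grp} = {m ∈ t.2 | i ∈ m.grp}

/-- ∼_G: transitive closure of the union of the ∼_i, i ∈ G. -/
def reach {P A : Type} (owner : A → P) (G : Set P) :
    Set A × Set (Msg P A) → Set A × Set (Msg P A) → Prop :=
  Relation.TransGen (fun s t => ∃ i ∈ G, indist owner i s t)

/-- Semantics ⊨_H (telling setting): C_G quantifies over H-compliant telling states. -/
def sat {P A : Type} (owner : A → P) (H : Set (Set P)) :
    Form P A → Set A → Set (Msg P A) → Prop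
  | .atom p, V, _ => p ∈ V
  | .neg φ, V, M => ¬ sat owner H φ V M
  | .and φ ψ, V, M => sat owner H φ V M ∧ sat owner H ψ V M
  | .or φ ψ, V, M => sat owner H φ V M ∨ sat owner H ψ V M
  | .ck G φ, V, M => ∀ V' M', TState owner V' M' → HComp H M' →
      reach owner G (V, M) (V', M') → sat owner H φ V' M'

/-- The complete hypergraph: all nonempty subsets of players. -/
def completeH (P : Type) : Set (Set P) := {B | B.Nonempty}

/-- Iterated knowledge K_{i₁}…K_{i_k} φ along a word. -/
def Kw {P A : Type} (w : List P) (φ : Form P A) : Form P A :=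
  w.foldr (fun i ψ => Form.ck {i} ψ) φ

section AuxCK

variable {P A : Type}

lemma tstate_hcomp {owner : A → P} {V : Set A} {M : Set (Msg P A)}
    (h : TState owner V M) : HComp (completeH P) M :=
  fun m hm => ⟨m.sender, (h m hm).1⟩

/-- Simulation invariant. -/
def Jinv (owner : A → P) (s t : Set A × Set (Msg P A)) : Prop :=
  s.1 ⊆ t.1 ∧ s.2 ⊆ t.2 ∧
  ∀ m ∈ s.2, (m.fact ∈ t.1 → m.fact ∈ s.1) ∧ owner m.fact = m.sender ∧ m.sender ∈ m.grp

lemma jinv_base {owner : A → P} {V V₂ : Set A} {M M₂ : Set (Msg P A)}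
    (h : TState owner V M) (h1 : V ⊆ V₂) (h2 : M ⊆ M₂) :
    Jinv owner (V, M) (V₂, M₂) := by
  refine ⟨h1, h2, fun m hm => ⟨fun _ => (h m hm).2.2, (h m hm).2.1, (h m hm).1⟩⟩

lemma jinv_tstate {owner : A → P} {s t : Set A × Set (Msg P A)}
    (hJ : Jinv owner s t) (ht : TState owner t.1 t.2) : TState owner s.1 s.2 := by
  intro m hm
  obtain ⟨h1, h2, h3⟩ := hJ
  obtain ⟨hf, ho, hs⟩ := h3 m hm
  exact ⟨hs, ho, hf ((ht m (h2 hm)).2.2)⟩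

lemma sim_step {owner : A → P} {i : P} {s t t' : Set A × Set (Msg P A)}
    (hind : indist owner i t t') (hJ : Jinv owner s t) :
    ∃ s', indist owner i s s' ∧ Jinv owner s' t' := by
  obtain ⟨hV, hM⟩ := hind
  obtain ⟨hsV, hsM, hfact⟩ := hJ
  refine ⟨({p ∈ s.1 | owner p = i} ∪ {p ∈ t'.1 | owner p ≠ i},
          {m ∈ s.2 | i ∈ m.grp} ∪
            {m ∈ t'.2 | i ∉ m.grp ∧ owner m.fact = m.sender ∧ m.sender ∈ m.grp}),
        ⟨?_, ?_⟩, ?_, ?_, ?_⟩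
  · ext p
    simp only [Set.mem_setOf_eq, Set.mem_union]
    tauto
  · ext m
    simp only [Set.mem_setOf_eq, Set.mem_union]
    tauto
  · -- V' ⊆ t'.1
    intro p hp
    rcases hp with ⟨hp, hpi⟩ | ⟨hp, _⟩
    · have : p ∈ {p ∈ t'.1 | owner p = i} := by
        rw [← hV]; exact ⟨hsV hp, hpi⟩
      exact this.1
    · exact hp
  · -- M' ⊆ t'.2
    intro m hm
    rcases hm with ⟨hm, hmi⟩ | ⟨hm, _⟩
    · have : m ∈ {m ∈ t'.2 | i ∈ m.grp} := by
        rw [← hM]; exact ⟨hsM hm, hmi⟩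
      exact this.1
    · exact hm
  · -- fact condition
    intro m hm
    rcases hm with ⟨hm, hmi⟩ | ⟨hm, hni, ho, hsg⟩
    · obtain ⟨hf, ho, hsg⟩ := hfact m hm
      refine ⟨?_, ho, hsg⟩
      intro hft'
      by_cases hoi : owner m.fact = i
      · have : m.fact ∈ {p ∈ t.1 | owner p = i} := by
          rw [hV]; exact ⟨hft', hoi⟩
        exact Or.inl ⟨hf this.1, hoi⟩
      · exact Or.inr ⟨hft', hoi⟩
    · refine ⟨?_, ho, hsg⟩
      intro hft'
      have hoi : owner m.fact ≠ i := by
        rw [ho]; intro h; exact hni (h ▸ hsg)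
      exact Or.inr ⟨hft', hoi⟩

lemma sim {owner : A → P} {G : Set P} {t t' : Set A × Set (Msg P A)}
    (h : reach owner G t t') :
    ∀ s, Jinv owner s t → ∃ s', reach owner G s s' ∧ Jinv owner s' t' := by
  induction h with
  | single hstep =>
      intro s hJ
      obtain ⟨i, hi, hind⟩ := hstep
      obtain ⟨s', h1, h2⟩ := sim_step hind hJ
      exact ⟨s', Relation.TransGen.single ⟨i, hi, h1⟩, h2⟩
  | tail _ hstep ih =>
      intro s hJ
      obtain ⟨s'', hr, hJ''⟩ := ih s hJ
      obtain ⟨i, hi, hind⟩ := hstep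
      obtain ⟨s', h1, h2⟩ := sim_step hind hJ''
      exact ⟨s', hr.tail ⟨i, hi, h1⟩, h2⟩

lemma sat_mono {owner : A → P} (φ : Form P A) (hp : Positive φ) :
    ∀ V₁ M₁ V₂ M₂, TState owner V₁ M₁ → TState owner V₂ M₂ → V₁ ⊆ V₂ → M₁ ⊆ M₂ →
    sat owner (completeH P) φ V₁ M₁ → sat owner (completeH P) φ V₂ M₂ := by
  induction φ with
  | atom p =>
      intro V₁ M₁ V₂ M₂ _ _ hV _ hs
      exact hV hs
  | neg φ ih => exact absurd hp (by simp [Positive])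
  | and φ ψ ihφ ihψ =>
      intro V₁ M₁ V₂ M₂ t1 t2 hV hM hs
      exact ⟨ihφ hp.1 V₁ M₁ V₂ M₂ t1 t2 hV hM hs.1, ihψ hp.2 V₁ M₁ V₂ M₂ t1 t2 hV hM hs.2⟩
  | or φ ψ ihφ ihψ =>
      intro V₁ M₁ V₂ M₂ t1 t2 hV hM hs
      rcases hs with hs | hs
      · exact Or.inl (ihφ hp.1 V₁ M₁ V₂ M₂ t1 t2 hV hM hs)
      · exact Or.inr (ihψ hp.2 V₁ M₁ V₂ M₂ t1 t2 hV hM hs)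
  | ck G' φ ih =>
      intro V₁ M₁ V₂ M₂ t1 t2 hV hM hs
      intro V' M' ht' _ hr'
      obtain ⟨s', hrs, hJ⟩ := sim hr' (V₁, M₁) (jinv_base t1 hV hM)
      have hts' : TState owner s'.1 s'.2 := jinv_tstate hJ ht'
      exact ih hp s'.1 s'.2 V' M' hts' ht' hJ.1 hJ.2.1
        (hs s'.1 s'.2 hts' (tstate_hcomp hts') hrs)

/-- The minimal i-variant of a state. -/
def low (owner : A → P) (i : P) (s : Set A × Set (Msg P A)) : Set A × Set (Msg P A) :=
  ({p ∈ s.1 | owner p = i} ∪ Facts {m ∈ s.2 | i ∈ m.grp}, {m ∈ s.2 | i ∈ m.grp})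

def lows (owner : A → P) (l : List P) (s : Set A × Set (Msg P A)) :
    Set A × Set (Msg P A) :=
  l.foldl (fun t i => low owner i t) s

lemma low_tstate {owner : A → P} {s : Set A × Set (Msg P A)} (i : P)
    (h : TState owner s.1 s.2) : TState owner (low owner i s).1 (low owner i s).2 := by
  intro m hm
  obtain ⟨hm, hmi⟩ := hm
  exact ⟨(h m hm).1, (h m hm).2.1, Or.inr ⟨m, ⟨hm, hmi⟩, rfl⟩⟩

lemma low_indist {owner : A → P} {s : Set A × Set (Msg P A)} (i : P)
    (h : TState owner s.1 s.2) : indist owner i s (low owner i s) := by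
  constructor
  · ext p
    simp only [low, Set.mem_setOf_eq, Set.mem_union]
    constructor
    · rintro ⟨hp, hpi⟩; exact ⟨Or.inl ⟨hp, hpi⟩, hpi⟩
    · rintro ⟨hp | hp, hpi⟩
      · exact ⟨hp.1, hpi⟩
      · obtain ⟨m, ⟨hm, hmi⟩, rfl⟩ := hp
        obtain ⟨hsg, ho, hf⟩ := h m hm
        exact ⟨hf, hpi⟩
  · ext m
    simp only [low, Set.mem_setOf_eq]
    tauto

lemma lows_cons {owner : A → P} (i : P) (l : List P) (s : Set A × Set (Msg P A)) :
    lows owner (i :: l) s = lows owner l (low owner i s) := rfl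

lemma lows_tstate {owner : A → P} (l : List P) :
    ∀ s : Set A × Set (Msg P A), TState owner s.1 s.2 →
      TState owner (lows owner l s).1 (lows owner l s).2 := by
  induction l with
  | nil => intro s h; exact h
  | cons i l ih => intro s h; exact ih (low owner i s) (low_tstate i h)

lemma lows_reach {owner : A → P} {G : Set P} (l : List P) (hne : l ≠ [])
    (hl : ∀ i ∈ l, i ∈ G) :
    ∀ s : Set A × Set (Msg P A), TState owner s.1 s.2 →
      reach owner G s (lows owner l s) := by
  induction l with
  | nil => exact absurd rfl hne
  | cons i l ih =>
      intro s h
      have hstep : reach owner G s (low owner i s) :=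
        Relation.TransGen.single ⟨i, hl i List.mem_cons_self, low_indist i h⟩
      rcases eq_or_ne l [] with rfl | hl'
      · exact hstep
      · exact hstep.trans (ih hl' (fun j hj => hl j (List.mem_cons_of_mem i hj))
          (low owner i s) (low_tstate i h))

lemma lows_form {owner : A → P} (l : List P) (hne : l ≠ []) :
    ∀ s : Set A × Set (Msg P A), TState owner s.1 s.2 →
      (lows owner l s).2 = {m ∈ s.2 | ∀ j ∈ l, j ∈ m.grp} ∧
      (lows owner l s).1 ⊆
        {p ∈ s.1 | ∀ j ∈ l, owner p = j} ∪ Facts (lows owner l s).2 := by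
  induction l with
  | nil => exact absurd rfl hne
  | cons i l ih =>
      intro s h
      rcases eq_or_ne l [] with rfl | hl'
      · constructor
        · ext m
          simp only [lows, List.foldl, low, Set.mem_setOf_eq, List.mem_singleton]
          constructor
          · rintro ⟨hm, hmi⟩; exact ⟨hm, fun j hj => hj ▸ hmi⟩
          · rintro ⟨hm, hmi⟩; exact ⟨hm, hmi i rfl⟩
        · intro p hp
          rcases hp with ⟨hp, hpi⟩ | hp
          · exact Or.inl ⟨hp, fun j hj => by
              rw [List.mem_singleton] at hj; rw [hj]; exact hpi⟩
          · right
            obtain ⟨m, ⟨hm, hmi⟩, rfl⟩ := hp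
            refine ⟨m, ?_, rfl⟩
            show m ∈ (lows owner [i] s).2
            exact ⟨hm, hmi⟩
      · rw [lows_cons]
        have ht' := low_tstate (owner := owner) i h
        obtain ⟨hM, hV⟩ := ih hl' (low owner i s) ht'
        have hMeq : (lows owner l (low owner i s)).2 =
            {m ∈ s.2 | ∀ j ∈ i :: l, j ∈ m.grp} := by
          rw [hM]
          ext m
          simp only [low, Set.mem_setOf_eq, List.mem_cons]
          constructor
          · rintro ⟨⟨hm, hmi⟩, hml⟩
            exact ⟨hm, fun j hj => hj.elim (fun e => e ▸ hmi) (hml j)⟩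
          · rintro ⟨hm, hml⟩
            exact ⟨⟨hm, hml i (Or.inl rfl)⟩, fun j hj => hml j (Or.inr hj)⟩
        refine ⟨hMeq, ?_⟩
        intro p hp
        have hp' := hV hp
        rcases hp' with ⟨hp1, hp2⟩ | hp1
        · -- p ∈ (low owner i s).1 with ∀ j ∈ l, owner p = j
          rcases hp1 with ⟨hps, hpi⟩ | hpf
          · exact Or.inl ⟨hps, fun j hj =>
              (List.mem_cons.mp hj).elim (fun e => e ▸ hpi) (hp2 j)⟩
          · -- p ∈ Facts of i-messages; owner p = j for all j ∈ l; push into final Facts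
            right
            obtain ⟨m, ⟨hm, hmi⟩, rfl⟩ := hpf
            obtain ⟨hsg, ho, hf⟩ := h m hm
            refine ⟨m, ?_, rfl⟩
            rw [hMeq]
            refine ⟨hm, fun j hj => ?_⟩
            rcases List.mem_cons.mp hj with rfl | hj
            · exact hmi
            · have : owner m.fact = j := hp2 j hj
              rw [ho] at this
              exact this ▸ hsg
        · right
          obtain ⟨m, hm, rfl⟩ := hp1
          exact ⟨m, hm, rfl⟩

lemma reach_lower {owner : A → P} {G : Set P} {V : Set A} {M : Set (Msg P A)}
    {t : Set A × Set (Msg P A)} (h : reach owner G (V, M) t) :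
    {p ∈ V | ∀ i ∈ G, owner p = i} ⊆ t.1 ∧ {m ∈ M | ∀ i ∈ G, i ∈ m.grp} ⊆ t.2 := by
  have key : ∀ (u u' : Set A × Set (Msg P A)), (∃ i ∈ G, indist owner i u u') →
      ({p ∈ V | ∀ i ∈ G, owner p = i} ⊆ u.1 ∧ {m ∈ M | ∀ i ∈ G, i ∈ m.grp} ⊆ u.2) →
      ({p ∈ V | ∀ i ∈ G, owner p = i} ⊆ u'.1 ∧ {m ∈ M | ∀ i ∈ G, i ∈ m.grp} ⊆ u'.2) := by
    rintro u u' ⟨i, hi, hViu, hMiu⟩ ⟨h1, h2⟩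
    constructor
    · intro p hp
      have : p ∈ {p ∈ u'.1 | owner p = i} := by
        rw [← hViu]; exact ⟨h1 hp, hp.2 i hi⟩
      exact this.1
    · intro m hm
      have : m ∈ {m ∈ u'.2 | i ∈ m.grp} := by
        rw [← hMiu]; exact ⟨h2 hm, hm.2 i hi⟩
      exact this.1
  induction h with
  | single hstep => exact key _ _ hstep ⟨fun p hp => hp.1, fun m hm => hm.1⟩
  | tail _ hstep ih => exact key _ _ hstep ih

end AuxCK


theorem ck_distributes_over_disjunction {P A : Type} [Fintype P] (owner : A → P)
    (V : Set A) (M : Set (Msg P A)) (hS : TState owner V M)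
    (G : Set P) (hG : G.Nonempty)
    (φ₁ φ₂ : Form P A) (h₁ : Positive φ₁) (h₂ : Positive φ₂) :
    sat owner (completeH P) (.ck G (.or φ₁ φ₂)) V M ↔
      sat owner (completeH P) (.ck G φ₁) V M ∨
      sat owner (completeH P) (.ck G φ₂) V M := by
  constructor
  · intro h
    classical
    -- enumerate G in a nonempty list
    obtain ⟨i₀, hi₀⟩ := hG
    set l := (G.toFinite.toFinset).toList with hldef
    have hmem : ∀ i, i ∈ l ↔ i ∈ G := by
      intro i
      rw [hldef, Finset.mem_toList, Set.Finite.mem_toFinset]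
    have hne : l ≠ [] := by
      intro hnil
      have := (hmem i₀).mpr hi₀
      rw [hnil] at this
      exact absurd this List.not_mem_nil
    set s := lows owner l (V, M) with hsdef
    have hts : TState owner s.1 s.2 := lows_tstate l (V, M) hS
    have hrs : reach owner G (V, M) s :=
      lows_reach l hne (fun i hi => (hmem i).mp hi) (V, M) hS
    obtain ⟨hMform, hVform⟩ := lows_form l hne (V, M) hS
    -- s is below every reachable telling state
    have hmin : ∀ V' M', TState owner V' M' → reach owner G (V, M) (V', M') →
        s.1 ⊆ V' ∧ s.2 ⊆ M' := by
      intro V' M' ht' hr'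
      obtain ⟨hat, hmsg⟩ := reach_lower hr'
      have hM' : s.2 ⊆ M' := by
        intro m hm
        rw [hMform] at hm
        exact hmsg ⟨hm.1, fun i hi => hm.2 i ((hmem i).mpr hi)⟩
      refine ⟨?_, hM'⟩
      intro p hp
      rcases hVform hp with ⟨hp1, hp2⟩ | hp1
      · exact hat ⟨hp1, fun i hi => hp2 i ((hmem i).mpr hi)⟩
      · obtain ⟨m, hm, rfl⟩ := hp1
        exact (ht' m (hM' hm)).2.2
    have hsat : sat owner (completeH P) (.or φ₁ φ₂) s.1 s.2 :=
      h s.1 s.2 hts (tstate_hcomp hts) hrs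
    rcases hsat with hsat | hsat
    · left
      intro V' M' ht' _ hr'
      obtain ⟨hV', hM'⟩ := hmin V' M' ht' hr'
      exact sat_mono φ₁ h₁ s.1 s.2 V' M' hts ht' hV' hM' hsat
    · right
      intro V' M' ht' _ hr'
      obtain ⟨hV', hM'⟩ := hmin V' M' ht' hr'
      exact sat_mono φ₂ h₂ s.1 s.2 V' M' hts ht' hV' hM' hsat
  · rintro (h | h) V' M' ht' hc' hr'
    · exact Or.inl (h V' M' ht' hc' hr')
    · exact Or.inr (h V' M' ht' hc' hr')
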